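/- If A ∈ Mₙ(ℂ) is Hermitian, then its diagonal vector diag(A) is majorized by its eigenvalue vector λ(A): diag(A) ≺ λ(A). -/

import Mathlib

/-- The sum of the `k` largest entries of `α`: the supremum of the sums of `α`
over subsets of cardinality `k`. -/
noncomputable def kLargestSum {n : ℕ} (α : Fin n → ℝ) (k : ℕ) : ℝ :=
  sSup {x : ℝ | ∃ s : Finset (Fin n), s.card = k ∧ x = ∑ i ∈ s, α i}

/-- Vector majorization `α ≺ β`. -/
def IsMajorizedBy {n : ℕ} (α β : Fin n → ℝ) : Prop :=
  (∀ k : ℕ, k ≤ n → kLargestSum α k ≤ kLargestSum β k) ∧ ∑ i, α i = ∑ i, β i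

lemma kLargestSum_zero' {n : ℕ} (γ : Fin n → ℝ) : kLargestSum γ 0 = 0 := by
  have : {x : ℝ | ∃ s : Finset (Fin n), s.card = 0 ∧ x = ∑ i ∈ s, γ i} = {0} := by
    ext x
    simp only [Set.mem_setOf_eq, Set.mem_singleton_iff, Finset.card_eq_zero]
    constructor
    · rintro ⟨s, rfl, rfl⟩; simp
    · rintro rfl; exact ⟨∅, rfl, by simp⟩
  rw [kLargestSum, this, csSup_singleton]

lemma bddAbove_sums {n : ℕ} (γ : Fin n → ℝ) (k : ℕ) :
    BddAbove {x : ℝ | ∃ s : Finset (Fin n), s.card = k ∧ x = ∑ i ∈ s, γ i} := by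
  have hsub : {x : ℝ | ∃ s : Finset (Fin n), s.card = k ∧ x = ∑ i ∈ s, γ i} ⊆
      Set.range (fun s : Finset (Fin n) => ∑ i ∈ s, γ i) := by
    rintro x ⟨s, _, rfl⟩; exact ⟨s, rfl⟩
  exact ((Set.finite_range _).subset hsub).bddAbove

/-- Fractional knapsack bound. -/
lemma frac_bound {n k : ℕ} (β : Fin n → ℝ) (t : Finset (Fin n)) (ht : t.card = k)
    (c : ℝ) (hc1 : ∀ j ∈ t, c ≤ β j) (hc2 : ∀ j ∉ t, β j ≤ c)
    (w : Fin n → ℝ) (hw0 : ∀ j, 0 ≤ w j) (hw1 : ∀ j, w j ≤ 1)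
    (hws : ∑ j, w j = (k : ℝ)) :
    ∑ j, w j * β j ≤ ∑ j ∈ t, β j := by
  have key : ∀ j, w j * β j ≤
      (if j ∈ t then β j else 0) + (w j - (if j ∈ t then 1 else 0)) * c := by
    intro j
    by_cases h : j ∈ t
    · simp only [h, if_pos]
      nlinarith [hc1 j h, hw1 j]
    · simp only [h, if_neg, not_false_iff]
      nlinarith [hc2 j h, hw0 j]
  calc ∑ j, w j * β j
      ≤ ∑ j, ((if j ∈ t then β j else 0) + (w j - (if j ∈ t then 1 else 0)) * c) :=
        Finset.sum_le_sum fun j _ => key j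
    _ = ∑ j ∈ t, β j := by
        rw [Finset.sum_add_distrib]
        have h1 : ∑ j, (if j ∈ t then β j else 0) = ∑ j ∈ t, β j := by
          rw [Finset.sum_ite_mem, Finset.univ_inter]
        have h2 : ∑ j : Fin n, (w j - (if j ∈ t then 1 else 0)) * c = 0 := by
          rw [← Finset.sum_mul, Finset.sum_sub_distrib, hws]
          have : ∑ j : Fin n, (if j ∈ t then (1 : ℝ) else 0) = (k : ℝ) := by
            rw [Finset.sum_ite_mem, Finset.univ_inter, Finset.sum_const, ht]
            simp
          rw [this, sub_self, zero_mul]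
        rw [h1, h2, add_zero]

/-- There is a cardinality-`k` set containing the `k` largest values of `β`. -/
lemma exists_top_set {n k : ℕ} (β : Fin n → ℝ) (hk : k ≤ n) :
    ∃ t : Finset (Fin n), t.card = k ∧ ∀ i ∈ t, ∀ j ∉ t, β j ≤ β i := by
  obtain ⟨t0, ht0sub, ht0⟩ := Finset.exists_subset_card_eq (by simpa using hk :
    k ≤ (Finset.univ : Finset (Fin n)).card)
  have hne : (Finset.univ.powersetCard k : Finset (Finset (Fin n))).Nonempty :=
    ⟨t0, Finset.mem_powersetCard.mpr ⟨ht0sub, ht0⟩⟩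
  obtain ⟨t, htmem, htmax⟩ := Finset.exists_max_image _ (fun s => ∑ i ∈ s, β i) hne
  obtain ⟨-, htcard⟩ := Finset.mem_powersetCard.mp htmem
  refine ⟨t, htcard, fun i hi j hj => ?_⟩
  by_contra hlt
  push_neg at hlt
  set t' : Finset (Fin n) := insert j (t.erase i) with ht'
  have hjni : j ∉ t.erase i := fun h => hj (Finset.mem_of_mem_erase h)
  have hcard' : t'.card = k := by
    have hk1 : 1 ≤ k := htcard ▸ Finset.card_pos.mpr ⟨i, hi⟩
    rw [ht', Finset.card_insert_of_notMem hjni, Finset.card_erase_of_mem hi, htcard]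
    omega
  have hmem' : t' ∈ Finset.univ.powersetCard k :=
    Finset.mem_powersetCard.mpr ⟨Finset.subset_univ _, hcard'⟩
  have hsum' : ∑ x ∈ t', β x = β j + (∑ x ∈ t, β x - β i) := by
    rw [ht', Finset.sum_insert hjni]
    congr 1
    rw [Finset.sum_erase_eq_sub hi]
  have := htmax t' hmem'
  rw [hsum'] at this
  linarith

open Matrix in
lemma col_sum_one {n : ℕ} {A : Matrix (Fin n) (Fin n) ℂ} (hA : A.IsHermitian) (j : Fin n) :
    ∑ i, Complex.normSq ((hA.eigenvectorUnitary : Matrix (Fin n) (Fin n) ℂ) i j) = 1 := by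
  have h := (Matrix.mem_unitaryGroup_iff').mp hA.eigenvectorUnitary.2
  have h2 := congrArg (fun M => (M j j).re) h
  simp [Matrix.mul_apply, Matrix.one_apply, Matrix.star_apply, Complex.re_sum] at h2
  rw [← h2]
  simp [Complex.normSq_apply, Matrix.IsHermitian.eigenvectorUnitary_apply]

open Matrix in
lemma row_sum_one {n : ℕ} {A : Matrix (Fin n) (Fin n) ℂ} (hA : A.IsHermitian) (i : Fin n) :
    ∑ j, Complex.normSq ((hA.eigenvectorUnitary : Matrix (Fin n) (Fin n) ℂ) i j) = 1 := by
  have h := (Matrix.mem_unitaryGroup_iff).mp hA.eigenvectorUnitary.2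
  have h2 := congrArg (fun M => (M i i).re) h
  simp [Matrix.mul_apply, Matrix.one_apply, Matrix.star_apply, Complex.re_sum] at h2
  rw [← h2]
  simp [Complex.normSq_apply, Matrix.IsHermitian.eigenvectorUnitary_apply]

open Matrix in
lemma diag_formula {n : ℕ} {A : Matrix (Fin n) (Fin n) ℂ} (hA : A.IsHermitian) (i : Fin n) :
    (A i i).re = ∑ j, hA.eigenvalues j *
      Complex.normSq ((hA.eigenvectorUnitary : Matrix (Fin n) (Fin n) ℂ) i j) := by
  have hs := hA.spectral_theorem
  rw [Unitary.conjStarAlgAut_apply] at hs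
  have h := congrArg (fun M : Matrix (Fin n) (Fin n) ℂ => (M i i).re) hs
  simp only [Matrix.mul_apply, Matrix.diagonal_apply, Matrix.star_apply, Finset.sum_ite_eq,
    Finset.mem_univ, if_pos] at h
  rw [h]
  simp only [Complex.re_sum]
  apply Finset.sum_congr rfl
  intro j _
  simp only [mul_ite, mul_zero, Finset.sum_ite_eq', Finset.mem_univ, if_pos]
  rw [Complex.star_def, mul_right_comm, Complex.mul_conj]
  simp [← Complex.ofReal_mul, mul_comm]

/-- **Schur's theorem** (1923): the diagonal of a Hermitian matrix is majorized by
its eigenvalue vector. -/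
theorem schur_theorem {n : ℕ} (A : Matrix (Fin n) (Fin n) ℂ) (hA : A.IsHermitian) :
    IsMajorizedBy (fun i => (A i i).re) hA.eigenvalues := by
  classical
  set β := hA.eigenvalues with hβ
  set U := (hA.eigenvectorUnitary : Matrix (Fin n) (Fin n) ℂ) with hU
  -- trace equality
  have htr : ∑ i, (A i i).re = ∑ i, β i := by
    calc ∑ i, (A i i).re = ∑ i, ∑ j, β j * Complex.normSq (U i j) :=
          Finset.sum_congr rfl fun i _ => diag_formula hA i
      _ = ∑ j, β j * ∑ i, Complex.normSq (U i j) := by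
          rw [Finset.sum_comm]
          exact Finset.sum_congr rfl fun j _ => by rw [Finset.mul_sum]
      _ = ∑ j, β j := Finset.sum_congr rfl fun j _ => by rw [col_sum_one hA j, mul_one]
  refine ⟨fun k hk => ?_, htr⟩
  rcases Nat.eq_zero_or_pos k with rfl | hkpos
  · rw [kLargestSum_zero', kLargestSum_zero']
  -- choose a top-k set for β
  obtain ⟨t, htcard, htop⟩ := exists_top_set β hk
  have htne : t.Nonempty := Finset.card_pos.mp (htcard ▸ hkpos)
  obtain ⟨i0, hi0, hi0eq⟩ := t.exists_mem_eq_inf' htne β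
  -- main bound for each subset s of card k
  have main : ∀ s : Finset (Fin n), s.card = k →
      ∑ i ∈ s, (A i i).re ≤ ∑ j ∈ t, β j := by
    intro s hs
    set w : Fin n → ℝ := fun j => ∑ i ∈ s, Complex.normSq (U i j) with hw
    have hw0 : ∀ j, 0 ≤ w j := fun j =>
      Finset.sum_nonneg fun i _ => Complex.normSq_nonneg _
    have hw1 : ∀ j, w j ≤ 1 := by
      intro j
      calc w j ≤ ∑ i, Complex.normSq (U i j) :=
            Finset.sum_le_sum_of_subset_of_nonneg (Finset.subset_univ s)
              (fun i _ _ => Complex.normSq_nonneg _)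
        _ = 1 := col_sum_one hA j
    have hws : ∑ j, w j = (k : ℝ) := by
      rw [hw]
      rw [Finset.sum_comm]
      calc ∑ i ∈ s, ∑ j, Complex.normSq (U i j) = ∑ i ∈ s, (1 : ℝ) :=
            Finset.sum_congr rfl fun i _ => row_sum_one hA i
        _ = (k : ℝ) := by rw [Finset.sum_const, hs]; simp
    have hdiag : ∑ i ∈ s, (A i i).re = ∑ j, w j * β j := by
      calc ∑ i ∈ s, (A i i).re = ∑ i ∈ s, ∑ j, β j * Complex.normSq (U i j) :=
            Finset.sum_congr rfl fun i _ => diag_formula hA i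
        _ = ∑ j, w j * β j := by
            rw [Finset.sum_comm]
            refine Finset.sum_congr rfl fun j _ => ?_
            simp only [hw]
            rw [Finset.sum_mul]
            exact Finset.sum_congr rfl fun i _ => mul_comm _ _
    rw [hdiag]
    refine frac_bound β t htcard (t.inf' htne β) ?_ ?_ w hw0 hw1 hws
    · intro j hj
      exact Finset.inf'_le β hj
    · intro j hj
      rw [hi0eq]
      exact htop i0 hi0 j hj
  -- conclude via sSup
  have hBne : ∃ s : Finset (Fin n), s.card = k :=
    (Finset.exists_subset_card_eq (by simpa using hk :
      k ≤ (Finset.univ : Finset (Fin n)).card)).imp fun s h => h.2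
  obtain ⟨s0, hs0⟩ := hBne
  have hmemt : (∑ j ∈ t, β j) ∈
      {x : ℝ | ∃ s : Finset (Fin n), s.card = k ∧ x = ∑ i ∈ s, β i} :=
    ⟨t, htcard, rfl⟩
  have hle : ∑ j ∈ t, β j ≤ kLargestSum β k := le_csSup (bddAbove_sums β k) hmemt
  rw [kLargestSum]
  refine csSup_le ⟨∑ i ∈ s0, (A i i).re, s0, hs0, rfl⟩ ?_
  rintro x ⟨s, hs, rfl⟩
  exact (main s hs).trans hle
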